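/- Let S ⊆ ℝ^{n−1} be connected and let P ∈ ℝ[x₁,…,x_{n−1};x_n] have degree d_n in x_n, with leading coefficient c_{d_n}(x) (the coefficient of x_n^{d_n}). If c_{d_n} vanishes identically on S and P is projectively delineable on S, then P is delineable on S. -/

import Mathlib

noncomputable section

open Polynomial Finset

/-- The real projective line `ℝP¹`: the quotient of `ℝ² ∖ {0}` by proportionality. -/
abbrev RP1 : Type := Projectivization ℝ (Fin 2 → ℝ)

/-- The quotient topology on the real projective line. -/
instance : TopologicalSpace RP1 :=
  inferInstanceAs (TopologicalSpace (Quotient (projectivizationSetoid ℝ (Fin 2 → ℝ))))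

/-- Homogenization of a univariate real polynomial with respect to the degree `d`,
as a binary form (an element of `ℝ[x,y]`, homogeneous of degree `d` when `P.natDegree ≤ d`):
`H^d(P)(x,y) = ∑_{k=0}^d c_k x^k y^(d-k)`. -/
def homog (d : ℕ) (P : Polynomial ℝ) : MvPolynomial (Fin 2) ℝ :=
  ∑ k ∈ Finset.range (d + 1),
    MvPolynomial.C (P.coeff k) * MvPolynomial.X 0 ^ k * MvPolynomial.X 1 ^ (d - k)

/-- The pull-back `ι_M^{*}` of a binary form `g` along the parametrized line
`ι_M : x ↦ M (x,1)ᵀ`, i.e. the univariate polynomial `g(m₁₁ x + m₁₂, m₂₁ x + m₂₂)`.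
For `M = 1` this is the standard pull-back `ι^{*d} g = g(x, 1)`. -/
def pullM (M : Matrix (Fin 2) (Fin 2) ℝ) (g : MvPolynomial (Fin 2) ℝ) : Polynomial ℝ :=
  MvPolynomial.eval₂ Polynomial.C
    ![Polynomial.C (M 0 0) * Polynomial.X + Polynomial.C (M 0 1),
      Polynomial.C (M 1 0) * Polynomial.X + Polynomial.C (M 1 1)] g

/-- Right composition `R_M g = g ∘ M` of a binary form with a linear map of `ℝ²`. -/
def compM (M : Matrix (Fin 2) (Fin 2) ℝ) (g : MvPolynomial (Fin 2) ℝ) : MvPolynomial (Fin 2) ℝ :=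
  MvPolynomial.eval₂ MvPolynomial.C
    (fun i => ∑ j, MvPolynomial.C (M i j) * MvPolynomial.X j) g

/-- The operator `A^{*d} P = ι_A^{*d} (H^d P)`, i.e.
`A^{*d}P(x) = ∑_{k=0}^d c_k (a₁₁x+a₁₂)^k (a₂₁x+a₂₂)^{d-k}` for `P = ∑ c_k x^k`. -/
def AstarU (d : ℕ) (M : Matrix (Fin 2) (Fin 2) ℝ) (P : Polynomial ℝ) : Polynomial ℝ :=
  pullM M (homog d P)

/-- The Sylvester matrix of `P` and `Q` with respect to the fixed degrees `p` and `q`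
(padding with zero coefficients as if `deg P = p` and `deg Q = q`). -/
def sylvester {R : Type*} [CommRing R] (p q : ℕ) (P Q : Polynomial R) :
    Matrix (Fin (p + q)) (Fin (p + q)) R := fun i j =>
  if (i : ℕ) < q then
    (if (i : ℕ) ≤ (j : ℕ) ∧ (j : ℕ) ≤ (i : ℕ) + p then P.coeff (p + (i : ℕ) - (j : ℕ)) else 0)
  else
    (if (i : ℕ) - q ≤ (j : ℕ) ∧ (j : ℕ) ≤ (i : ℕ) then Q.coeff (q + ((i : ℕ) - q) - (j : ℕ)) else 0)

/-- The resultant `Res^{p,q}(P,Q)` with respect to the fixed degrees `p` and `q`: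
the determinant of the corresponding Sylvester matrix. -/
def resFixed {R : Type*} [CommRing R] (p q : ℕ) (P Q : Polynomial R) : R :=
  (sylvester p q P Q).det

/-- The discriminant `Disc^p(P)` of `P` with respect to the fixed degree `p`: the resultant
(with respect to degrees `(p-1, p-1)`) of the pull-backs of the two partial derivatives
`F_x`, `F_y` of the binary form `F = H^p(P)`; these pull-backs are `P'` and `p·P − x·P'`. -/
def discFixed {R : Type*} [CommRing R] (p : ℕ) (P : Polynomial R) : R :=
  (-1) ^ (p * (p - 1) / 2) *
    resFixed (p - 1) (p - 1) (Polynomial.derivative P)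
      (Polynomial.C (p : R) * P - Polynomial.X * Polynomial.derivative P)

/-- Evaluation `E_x` of a polynomial in `x₁,…,x_m;x_n` at `x ∈ ℝ^m` in its first `m`
variables, giving a univariate real polynomial in `x_n`. -/
def evalP {m : ℕ} (P : Polynomial (MvPolynomial (Fin m) ℝ)) (x : Fin m → ℝ) : Polynomial ℝ :=
  P.map (MvPolynomial.eval x : MvPolynomial (Fin m) ℝ →+* ℝ)

/-- The operator `A^{*d}` acting on the last variable of a polynomial in `x₁,…,x_m;x_n`:
`A^{*d}P(x,x_n) = ∑_{k=0}^d c_k(x) (a₁₁x_n+a₁₂)^k (a₂₁x_n+a₂₂)^{d-k}`. -/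
def AstarPoly {m : ℕ} (d : ℕ) (M : Matrix (Fin 2) (Fin 2) ℝ)
    (P : Polynomial (MvPolynomial (Fin m) ℝ)) : Polynomial (MvPolynomial (Fin m) ℝ) :=
  ∑ k ∈ Finset.range (d + 1),
    Polynomial.C (P.coeff k) *
      (Polynomial.C (MvPolynomial.C (M 0 0)) * Polynomial.X
        + Polynomial.C (MvPolynomial.C (M 0 1))) ^ k *
      (Polynomial.C (MvPolynomial.C (M 1 0)) * Polynomial.X
        + Polynomial.C (MvPolynomial.C (M 1 1))) ^ (d - k)

/-- The order of a (polynomial) function at a point: the smallest `k` such that some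
partial derivative of total order `k` does not vanish at the point, i.e. the smallest `k`
with `iteratedFDeriv ℝ k f v ≠ 0`; it is `⊤` if all derivatives vanish. -/
def ordAt {E : Type*} [NormedAddCommGroup E] [NormedSpace ℝ E] (f : E → ℝ) (v : E) : ℕ∞ :=
  sInf {k : ℕ∞ | ∃ n : ℕ, k = n ∧ iteratedFDeriv ℝ n f v ≠ 0}

/-- A function is order-invariant on a set if it has the same order at every point of the set. -/
def OrderInvariantOn {E : Type*} [NormedAddCommGroup E] [NormedSpace ℝ E]
    (f : E → ℝ) (S : Set E) : Prop :=
  ∀ x ∈ S, ∀ y ∈ S, ordAt f x = ordAt f y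

/-- `(v 0 : v 1)` is a projective root of the binary form `g` of multiplicity (exactly) `mult`:
in the factorization of `g`, the linear form vanishing on the line through `v` occurs with
exponent `mult`. -/
def HasProjRootOfMult (g : MvPolynomial (Fin 2) ℝ) (v : Fin 2 → ℝ) (mult : ℕ) : Prop :=
  ∃ h : MvPolynomial (Fin 2) ℝ,
    g = (MvPolynomial.C (v 1) * MvPolynomial.X 0 - MvPolynomial.C (v 0) * MvPolynomial.X 1) ^ mult * h
      ∧ MvPolynomial.eval v h ≠ 0

/-- The projective zero set `Z_{ℝP¹}(P,S)` of `P` over `S`, with respect to the degree `d`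
in the last variable: the set of `(x, (x_n : y))` with `x ∈ S` and `H^d(P)(x,(x_n,y)) = 0`. -/
def ZProj {m : ℕ} (d : ℕ) (P : Polynomial (MvPolynomial (Fin m) ℝ)) (S : Set (Fin m → ℝ)) :
    Set ((Fin m → ℝ) × RP1) :=
  {p | p.1 ∈ S ∧ ∃ (v : Fin 2 → ℝ) (hv : v ≠ 0),
    Projectivization.mk ℝ v hv = p.2 ∧ MvPolynomial.eval v (homog d (evalP P p.1)) = 0}

/-- `θ` is a (finite) system of real root functions for `P` on `S`: continuous functions with
pairwise disjoint graphs whose union is `Z_ℝ(P,S)`, each of constant positive multiplicity. -/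
def IsRealRootFunctions {m : ℕ} (P : Polynomial (MvPolynomial (Fin m) ℝ)) (S : Set (Fin m → ℝ))
    {k : ℕ} (θ : Fin k → (Fin m → ℝ) → ℝ) : Prop :=
  (∀ l, ContinuousOn (θ l) S) ∧
  (∀ x ∈ S, ∀ l l' : Fin k, l ≠ l' → θ l x ≠ θ l' x) ∧
  (∀ x ∈ S, ∀ t : ℝ, (evalP P x).eval t = 0 ↔ ∃ l, θ l x = t) ∧
  (∀ l : Fin k, ∃ mult : ℕ, 0 < mult ∧ ∀ x ∈ S, (evalP P x).rootMultiplicity (θ l x) = mult)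

/-- `P` is delineable on `S`. -/
def Delineable {m : ℕ} (P : Polynomial (MvPolynomial (Fin m) ℝ)) (S : Set (Fin m → ℝ)) : Prop :=
  ∃ (k : ℕ) (θ : Fin k → (Fin m → ℝ) → ℝ), IsRealRootFunctions P S θ

/-- `θ` is a (finite) system of projective root functions for `P` on `S` with respect to the
degree `d` in the last variable: continuous functions into `ℝP¹` with pairwise disjoint graphs
whose union is `Z_{ℝP¹}(P,S)`, each of constant positive multiplicity. -/
def IsProjRootFunctions {m : ℕ} (d : ℕ) (P : Polynomial (MvPolynomial (Fin m) ℝ))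
    (S : Set (Fin m → ℝ)) {k : ℕ} (θ : Fin k → (Fin m → ℝ) → RP1) : Prop :=
  (∀ l, ContinuousOn (θ l) S) ∧
  (∀ x ∈ S, ∀ l l' : Fin k, l ≠ l' → θ l x ≠ θ l' x) ∧
  (∀ x ∈ S, ∀ (v : Fin 2 → ℝ) (hv : v ≠ 0),
    (MvPolynomial.eval v (homog d (evalP P x)) = 0 ↔ ∃ l, θ l x = Projectivization.mk ℝ v hv)) ∧
  (∀ l : Fin k, ∃ mult : ℕ, 0 < mult ∧ ∀ x ∈ S, ∀ (v : Fin 2 → ℝ) (hv : v ≠ 0),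
    θ l x = Projectivization.mk ℝ v hv → HasProjRootOfMult (homog d (evalP P x)) v mult)

/-- `P` is projectively delineable on `S` (with respect to the degree `d` in the last variable). -/
def ProjDelineable {m : ℕ} (d : ℕ) (P : Polynomial (MvPolynomial (Fin m) ℝ))
    (S : Set (Fin m → ℝ)) : Prop :=
  ∃ (k : ℕ) (θ : Fin k → (Fin m → ℝ) → RP1), IsProjRootFunctions d P S θ

/-- `S` is an analytic submanifold of `ℝ^m`: around each of its points, in suitable
real-analytic coordinates, `S` is an open piece of a linear subspace. -/
def IsAnalyticSubmanifold {m : ℕ} (S : Set (Fin m → ℝ)) : Prop :=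
  ∀ s ∈ S, ∃ (U V : Set (Fin m → ℝ)) (φ ψ : (Fin m → ℝ) → (Fin m → ℝ))
      (L : Submodule ℝ (Fin m → ℝ)),
    IsOpen U ∧ IsOpen V ∧ s ∈ U ∧
    AnalyticOnNhd ℝ φ U ∧ AnalyticOnNhd ℝ ψ V ∧
    Set.MapsTo φ U V ∧ Set.MapsTo ψ V U ∧
    Set.EqOn (ψ ∘ φ) id U ∧ Set.EqOn (φ ∘ ψ) id V ∧
    φ '' (U ∩ S) = V ∩ (L : Set (Fin m → ℝ))

end
noncomputable section Aux

lemma vec_ne_zero_snd (t : ℝ) : (![t, 1] : Fin 2 → ℝ) ≠ 0 := by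
  intro h
  simpa using congrFun h 1

lemma vec_infty_ne_zero : (![1, 0] : Fin 2 → ℝ) ≠ 0 := by
  intro h
  simpa using congrFun h 0

/-- The point at infinity of `ℝP¹`. -/
def inftyPt : RP1 := Projectivization.mk ℝ ![1, 0] vec_infty_ne_zero

/-- The affine chart `(x : y) ↦ x / y` on `ℝP¹`. -/
def chart : RP1 → ℝ :=
  Projectivization.lift (fun v => v.1 0 / v.1 1) (by
    rintro ⟨a, ha⟩ ⟨b, hb⟩ t h
    have h0 : a = t • b := h
    have ht : t ≠ 0 := by
      rintro rfl
      rw [zero_smul] at h0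
      exact ha h0
    simp only [h0, Pi.smul_apply, smul_eq_mul]
    exact mul_div_mul_left _ _ ht)

@[simp] lemma chart_mk (v : Fin 2 → ℝ) (hv : v ≠ 0) :
    chart (Projectivization.mk ℝ v hv) = v 0 / v 1 := rfl

lemma eq_fin2 (v : Fin 2 → ℝ) : v = ![v 0, v 1] := by
  funext i
  fin_cases i <;> simp

lemma mk_eq_infty_iff (v : Fin 2 → ℝ) (hv : v ≠ 0) :
    Projectivization.mk ℝ v hv = inftyPt ↔ v 1 = 0 := by
  rw [inftyPt, Projectivization.mk_eq_mk_iff]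
  constructor
  · rintro ⟨a, rfl⟩
    simp
  · intro h1
    have h0 : v 0 ≠ 0 := by
      intro h0
      apply hv
      rw [eq_fin2 v, h0, h1]
      funext i; fin_cases i <;> simp
    refine ⟨Units.mk0 (v 0) h0, ?_⟩
    funext i
    fin_cases i <;> simp [h1, Units.smul_def]

lemma mk_eq_mk_affine (v : Fin 2 → ℝ) (hv : v ≠ 0) (h1 : v 1 ≠ 0) :
    Projectivization.mk ℝ v hv = Projectivization.mk ℝ ![v 0 / v 1, 1] (vec_ne_zero_snd _) := by
  rw [Projectivization.mk_eq_mk_iff']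
  refine ⟨v 1, ?_⟩
  funext i
  fin_cases i <;> simp [mul_div_cancel₀ _ h1]

lemma mk_affine_inj {s t : ℝ} (h : Projectivization.mk ℝ ![s, 1] (vec_ne_zero_snd s)
    = Projectivization.mk ℝ ![t, 1] (vec_ne_zero_snd t)) : s = t := by
  rw [Projectivization.mk_eq_mk_iff'] at h
  obtain ⟨a, ha⟩ := h
  have h1 := congrFun ha 1
  have h0 := congrFun ha 0
  simp [Pi.smul_apply, smul_eq_mul] at h1 h0
  rw [h1, one_mul] at h0
  exact h0.symm

end Aux
noncomputable section Top

lemma isClosed_infty : IsClosed ({inftyPt} : Set RP1) := by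
  apply (isQuotientMap_quotient_mk' (s := projectivizationSetoid ℝ (Fin 2 → ℝ))).isClosed_preimage.mp
  have : (@Quotient.mk' _ (projectivizationSetoid ℝ (Fin 2 → ℝ))) ⁻¹' ({inftyPt} : Set RP1)
      = {v : {v : Fin 2 → ℝ // v ≠ 0} | v.1 1 = 0} := by
    ext v
    have : (@Quotient.mk' _ (projectivizationSetoid ℝ (Fin 2 → ℝ)) v : RP1) = Projectivization.mk ℝ v.1 v.2 := rfl
    simp only [Set.mem_preimage, Set.mem_singleton_iff, Set.mem_setOf_eq, this]
    exact mk_eq_infty_iff _ _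
  rw [this]
  exact isClosed_eq ((continuous_apply 1).comp continuous_subtype_val) continuous_const

lemma isOpen_affine : IsOpen {p : RP1 | p ≠ inftyPt} := by
  have : {p : RP1 | p ≠ inftyPt} = ({inftyPt} : Set RP1)ᶜ := by
    ext p; simp
  rw [this]
  exact isClosed_infty.isOpen_compl

lemma continuousOn_chart : ContinuousOn chart {p : RP1 | p ≠ inftyPt} := by
  rw [continuousOn_open_iff isOpen_affine]
  intro t ht
  apply (isQuotientMap_quotient_mk' (s := projectivizationSetoid ℝ (Fin 2 → ℝ))).isOpen_preimage.mp
  have hpre : (@Quotient.mk' _ (projectivizationSetoid ℝ (Fin 2 → ℝ))) ⁻¹' ({p : RP1 | p ≠ inftyPt} ∩ chart ⁻¹' t)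
      = {v : {v : Fin 2 → ℝ // v ≠ 0} | v.1 1 ≠ 0}
        ∩ (fun v : {v : Fin 2 → ℝ // v ≠ 0} => v.1 0 / v.1 1) ⁻¹' t := by
    ext v
    have h1 : (@Quotient.mk' _ (projectivizationSetoid ℝ (Fin 2 → ℝ)) v : RP1) = Projectivization.mk ℝ v.1 v.2 := rfl
    simp only [Set.mem_preimage, Set.mem_inter_iff, Set.mem_setOf_eq, h1, chart_mk]
    exact and_congr (not_congr (mk_eq_infty_iff _ _)) Iff.rfl
  erw [hpre]
  have hopen : IsOpen {v : {v : Fin 2 → ℝ // v ≠ 0} | v.1 1 ≠ 0} :=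
    isOpen_ne_fun ((continuous_apply 1).comp continuous_subtype_val) continuous_const
  have hco : ContinuousOn (fun v : {v : Fin 2 → ℝ // v ≠ 0} => v.1 0 / v.1 1)
      {v | v.1 1 ≠ 0} :=
    ContinuousOn.div (((continuous_apply 0).comp continuous_subtype_val).continuousOn)
      (((continuous_apply 1).comp continuous_subtype_val).continuousOn) (fun v hv => hv)
  exact (continuousOn_open_iff hopen).mp hco t ht

end Top
noncomputable section PolyAux

lemma homog_eval_infty (d : ℕ) (Q : Polynomial ℝ) :
    MvPolynomial.eval ![1, 0] (homog d Q) = Q.coeff d := by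
  rw [homog, map_sum]
  rw [Finset.sum_eq_single_of_mem d (Finset.self_mem_range_succ d)]
  · simp
  · intro k hk hkd
    have h : d - k ≠ 0 := Nat.sub_ne_zero_of_lt
      (lt_of_le_of_ne (Nat.lt_succ_iff.mp (Finset.mem_range.mp hk)) hkd)
    simp [zero_pow h]

lemma homog_eval_affine {d : ℕ} {Q : Polynomial ℝ} (h : Q.natDegree ≤ d) (t : ℝ) :
    MvPolynomial.eval ![t, 1] (homog d Q) = Q.eval t := by
  rw [homog, map_sum, Polynomial.eval_eq_sum_range' (Nat.lt_succ_of_le h)]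
  apply Finset.sum_congr rfl
  intro k _
  simp

/-- Substitution `X 0 ↦ X`, `X 1 ↦ 1` from binary forms to univariate polynomials. -/
def ev2 : MvPolynomial (Fin 2) ℝ →+* Polynomial ℝ :=
  MvPolynomial.eval₂Hom Polynomial.C ![Polynomial.X, 1]

lemma ev2_homog {d : ℕ} {Q : Polynomial ℝ} (h : Q.natDegree ≤ d) : ev2 (homog d Q) = Q := by
  have h1 : ev2 (homog d Q)
      = ∑ k ∈ Finset.range (d + 1), Polynomial.monomial k (Q.coeff k) := by
    rw [homog, map_sum]
    apply Finset.sum_congr rfl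
    intro k _
    simp [ev2, Polynomial.C_mul_X_pow_eq_monomial]
  rw [h1]
  exact (Polynomial.as_sum_range' Q (d + 1) (Nat.lt_succ_of_le h)).symm

lemma eval_ev2 (t : ℝ) (g : MvPolynomial (Fin 2) ℝ) :
    (ev2 g).eval t = MvPolynomial.eval ![t, 1] g := by
  have : (Polynomial.evalRingHom t).comp ev2
      = (MvPolynomial.eval ![t, 1] : MvPolynomial (Fin 2) ℝ →+* ℝ) := by
    apply MvPolynomial.ringHom_ext
    · intro r; simp [ev2]
    · intro i; fin_cases i <;> simp [ev2]
  exact congrArg (fun f => f g) this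

lemma rootMult_of_proj {d mult : ℕ} {Q : Polynomial ℝ} (h : Q.natDegree ≤ d) (t : ℝ)
    (hp : HasProjRootOfMult (homog d Q) ![t, 1] mult) :
    Q.rootMultiplicity t = mult := by
  obtain ⟨g, hfact, hg⟩ := hp
  have hv1 : (![t, 1] : Fin 2 → ℝ) 1 = 1 := rfl
  have hv0 : (![t, 1] : Fin 2 → ℝ) 0 = t := rfl
  rw [hv0, hv1] at hfact
  have hQ : Q = (Polynomial.X - Polynomial.C t) ^ mult * ev2 g := by
    have := congrArg ev2 hfact
    rw [ev2_homog h] at this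
    rw [this, map_mul, map_pow]
    congr 1
    simp [ev2, Polynomial.C_mul_X_pow_eq_monomial]
  have hgt : (ev2 g).eval t ≠ 0 := by
    rw [eval_ev2]; exact hg
  have hne : (Polynomial.X - Polynomial.C t) ^ mult * ev2 g ≠ 0 := by
    apply mul_ne_zero (pow_ne_zero _ (Polynomial.X_sub_C_ne_zero t))
    intro h0; rw [h0] at hgt; simp at hgt
  rw [hQ, Polynomial.rootMultiplicity_mul hne,
    Polynomial.rootMultiplicity_X_sub_C_pow,
    Polynomial.rootMultiplicity_eq_zero hgt, add_zero]

end PolyAux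
/-- Let `S ⊆ ℝ^m` be connected and `P` of degree `d_n` in `x_n` with leading
coefficient `c_{d_n}`. If `c_{d_n}` vanishes identically on `S` and `P` is projectively
delineable on `S`, then `P` is delineable on `S`. -/
theorem delineable_of_projDelineable_of_lc_eq_zero (m dn : ℕ)
    (P : Polynomial (MvPolynomial (Fin m) ℝ)) (hdeg : P.natDegree = dn)
    (S : Set (Fin m → ℝ)) (hS : IsConnected S)
    (hc : ∀ x ∈ S, MvPolynomial.eval x (P.coeff dn) = 0)
    (hdel : ProjDelineable dn P S) :
    Delineable P S := by
  obtain ⟨k, θ, hcont, hdisj, hroot, hmult⟩ := hdel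
  obtain ⟨x0, hx0⟩ := hS.nonempty
  have hQdeg : ∀ x : Fin m → ℝ, (evalP P x).natDegree ≤ dn := by
    intro x; rw [← hdeg]; exact Polynomial.natDegree_map_le
  have hinf : ∀ x ∈ S, ∃ l, θ l x = inftyPt := by
    intro x hx
    apply (hroot x hx ![1, 0] vec_infty_ne_zero).mp
    rw [homog_eval_infty, evalP, Polynomial.coeff_map]
    exact hc x hx
  rcases k with _ | k'
  · obtain ⟨l, -⟩ := hinf x0 hx0
    exact l.elim0
  haveI : ConnectedSpace S := Subtype.connectedSpace hS
  set A : Fin (k' + 1) → Set S := fun l => S.restrict (θ l) ⁻¹' {inftyPt} with hA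
  have hAclosed : ∀ l, IsClosed (A l) := fun l =>
    isClosed_infty.preimage (continuousOn_iff_continuous_restrict.mp (hcont l))
  have hAcover : ∀ p : S, ∃ l, p ∈ A l := by
    intro p
    obtain ⟨l, hl⟩ := hinf p.1 p.2
    exact ⟨l, hl⟩
  have hAdisj : ∀ (p : S) (l l' : Fin (k' + 1)), l ≠ l' → p ∈ A l → p ∈ A l' → False := by
    intro p l l' hne h1 h2
    have e1 : θ l p.1 = inftyPt := h1
    have e2 : θ l' p.1 = inftyPt := h2
    exact hdisj p.1 p.2 l l' hne (e1.trans e2.symm)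
  have hAopen : ∀ l, IsOpen (A l) := by
    intro l
    rw [← isClosed_compl_iff]
    have hcompl : (A l)ᶜ = ⋃ l' ∈ ({l}ᶜ : Set (Fin (k' + 1))), A l' := by
      ext p
      simp only [Set.mem_compl_iff, Set.mem_iUnion, Set.mem_singleton_iff, exists_prop]
      constructor
      · intro hp
        obtain ⟨l', hl'⟩ := hAcover p
        exact ⟨l', fun h => hp (h ▸ hl'), hl'⟩
      · rintro ⟨l', hne, hmem⟩ hmem'
        exact hAdisj p l l' (Ne.symm hne) hmem' hmem
    rw [hcompl]
    exact Set.Finite.isClosed_biUnion (Set.toFinite _) (fun i _ => hAclosed i)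
  obtain ⟨l0, hl0⟩ := hinf x0 hx0
  have hAall : A l0 = Set.univ := by
    rcases isClopen_iff.mp ⟨hAclosed l0, hAopen l0⟩ with h | h
    · exfalso
      have hmem : (⟨x0, hx0⟩ : S) ∈ A l0 := hl0
      rw [h] at hmem
      exact hmem
    · exact h
  have hone : ∀ x, ∀ hx : x ∈ S, θ l0 x = inftyPt := by
    intro x hx
    have hmem : (⟨x, hx⟩ : S) ∈ A l0 := hAall ▸ Set.mem_univ _
    exact hmem
  have hother : ∀ x ∈ S, ∀ l, l ≠ l0 → θ l x ≠ inftyPt := by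
    intro x hx l hne h
    exact hdisj x hx l l0 hne (h.trans (hone x hx).symm)
  set e : Fin k' → Fin (k' + 1) := l0.succAbove with he
  set φ : Fin k' → (Fin m → ℝ) → ℝ := fun i x => chart (θ (e i) x) with hφ
  have hkey : ∀ x, ∀ hx : x ∈ S, ∀ i : Fin k',
      θ (e i) x = Projectivization.mk ℝ ![φ i x, 1] (vec_ne_zero_snd _) := by
    intro x hx i
    have hne := hother x hx (e i) (Fin.succAbove_ne l0 i)
    have h1 : (θ (e i) x).rep 1 ≠ 0 := by
      intro h
      apply hne
      rw [← Projectivization.mk_rep (θ (e i) x)]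
      exact (mk_eq_infty_iff _ _).mpr h
    have hphi : φ i x = (θ (e i) x).rep 0 / (θ (e i) x).rep 1 := by
      show chart (θ (e i) x) = _
      conv_lhs => rw [← Projectivization.mk_rep (θ (e i) x)]
      rw [chart_mk]
    rw [hphi]
    conv_lhs => rw [← Projectivization.mk_rep (θ (e i) x)]
    exact mk_eq_mk_affine _ _ h1
  refine ⟨k', φ, ?_, ?_, ?_, ?_⟩
  · intro i
    apply ContinuousOn.comp continuousOn_chart (hcont (e i))
    intro x hx
    exact hother x hx (e i) (Fin.succAbove_ne l0 i)
  · intro x hx i i' hne heq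
    apply hdisj x hx (e i) (e i') (fun h => hne (Fin.succAbove_right_injective h))
    rw [hkey x hx i, hkey x hx i', heq]
  · intro x hx t
    rw [← homog_eval_affine (hQdeg x) t, hroot x hx ![t, 1] (vec_ne_zero_snd t)]
    constructor
    · rintro ⟨l, hl⟩
      have hlne : l ≠ l0 := by
        rintro rfl
        have hbad : Projectivization.mk ℝ ![t, 1] (vec_ne_zero_snd t) = inftyPt :=
          hl.symm.trans (hone x hx)
        have := (mk_eq_infty_iff _ _).mp hbad
        simp at this
      obtain ⟨i, rfl⟩ := Fin.exists_succAbove_eq hlne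
      exact ⟨i, mk_affine_inj ((hkey x hx i).symm.trans hl)⟩
    · rintro ⟨i, rfl⟩
      exact ⟨e i, hkey x hx i⟩
  · intro i
    obtain ⟨mult, hpos, hm⟩ := hmult (e i)
    refine ⟨mult, hpos, fun x hx => ?_⟩
    exact rootMult_of_proj (hQdeg x) _ (hm x hx ![φ i x, 1] (vec_ne_zero_snd _) (hkey x hx i))
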